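/- Let f : X → Y be an order-preserving map between posets with Y connected, such that for every y ∈ Y the subposet f⁻¹(Y_{≥ y}) is nonempty and connected. Then the induced map f* : Π₁(X, x₀) → Π₁(Y, f(x₀)) on fundamental groups (of the order complexes) is surjective. If moreover each f⁻¹(Y_{≥ y}) is simply connected, then f* is an isomorphism. -/

import Mathlib

namespace PosetHtpy

variable {E : Type*}

/-- Two elements are comparable. -/
def Comp [Preorder E] (a b : E) : Prop := a ≤ b ∨ b ≤ a

/-- `l` is a path from `a` to `b` in the poset: consecutive elements are comparable. -/
def IsPath [Preorder E] (l : List E) (a b : E) : Prop :=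
  l.head? = some a ∧ l.getLast? = some b ∧ l.Chain' Comp

/-- Homotopy of paths in a poset: the finest equivalence relation compatible with
concatenation generated by `xyz ∼ xz` for `x ≤ y ≤ z` (and its reverse) and `xyx ∼ x`,
`yxy ∼ y` for comparable `x`, `y`. -/
inductive Htpy [Preorder E] : List E → List E → Prop
  | refl (l : List E) : Htpy l l
  | symm {l m : List E} : Htpy l m → Htpy m l
  | trans {l m n : List E} : Htpy l m → Htpy m n → Htpy l n
  | up (p q : List E) (x y z : E) : x ≤ y → y ≤ z →
      Htpy (p ++ x :: y :: z :: q) (p ++ x :: z :: q)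
  | down (p q : List E) (x y z : E) : z ≤ y → y ≤ x →
      Htpy (p ++ x :: y :: z :: q) (p ++ x :: z :: q)
  | backforth (p q : List E) (x y : E) : Comp x y →
      Htpy (p ++ x :: y :: x :: q) (p ++ x :: q)

/-- A poset is connected: any two elements are joined by a path. -/
def Connected (E : Type*) [Preorder E] : Prop := ∀ a b : E, ∃ l : List E, IsPath l a b

/-- A poset is simply connected: connected, and every loop is homotopic to a constant path
(i.e. the fundamental group at any base point is trivial). -/
def SimplyConnected (E : Type*) [Preorder E] : Prop :=
  Connected E ∧ ∀ (x : E) (l : List E), IsPath l x x → Htpy l [x]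


section ChainCompat
variable {α β : Type*} {R : α → α → Prop}

@[simp] theorem List.chain'_singleton (a : α) : List.Chain' R [a] := List.isChain_singleton a

@[simp] theorem List.chain'_cons {x y : α} {l : List α} :
    List.Chain' R (x :: y :: l) ↔ R x y ∧ List.Chain' R (y :: l) := List.isChain_cons_cons

theorem List.chain'_cons' {x : α} {l : List α} :
    List.Chain' R (x :: l) ↔ (∀ y ∈ l.head?, R x y) ∧ List.Chain' R l := List.isChain_cons

theorem List.chain'_append {l₁ l₂ : List α} :
    List.Chain' R (l₁ ++ l₂) ↔ List.Chain' R l₁ ∧ List.Chain' R l₂ ∧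
      ∀ x ∈ l₁.getLast?, ∀ y ∈ l₂.head?, R x y := List.isChain_append

theorem List.chain'_map (f : β → α) {l : List β} :
    List.Chain' R (l.map f) ↔ List.Chain' (fun a b => R (f a) (f b)) l := List.isChain_map f

theorem List.chain'_reverse {l : List α} :
    List.Chain' R l.reverse ↔ List.Chain' (fun a b => R b a) l := List.isChain_reverse

theorem List.chain'_map_of_chain' {S : β → β → Prop} (f : α → β)
    (H : ∀ a b : α, R a b → S (f a) (f b)) {l : List α} (p : List.Chain' R l) :
    List.Chain' S (l.map f) := List.isChain_map_of_isChain f H p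

theorem List.Chain'.imp {S : α → α → Prop} (H : ∀ a b, R a b → S a b) {l : List α}
    (p : List.Chain' R l) : List.Chain' S l := List.IsChain.imp H p

end ChainCompat


section Basic
variable [Preorder E]

theorem Comp.rfl {a : E} : Comp a a := Or.inl le_rfl

theorem Comp.symm' {a b : E} (h : Comp a b) : Comp b a := h.symm

theorem Htpy.ctx {l m : List E} (h : Htpy l m) (p q : List E) :
    Htpy (p ++ l ++ q) (p ++ m ++ q) := by
  induction h with
  | refl l => exact .refl _
  | symm _ ih => exact (ih).symm
  | trans _ _ ih1 ih2 => exact ih1.trans ih2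
  | up p' q' x y z h1 h2 =>
      have := Htpy.up (p ++ p') (q' ++ q) x y z h1 h2
      simpa using this
  | down p' q' x y z h1 h2 =>
      have := Htpy.down (p ++ p') (q' ++ q) x y z h1 h2
      simpa using this
  | backforth p' q' x y h1 =>
      have := Htpy.backforth (p ++ p') (q' ++ q) x y h1
      simpa using this

theorem Htpy.appL {l m : List E} (h : Htpy l m) (p : List E) : Htpy (p ++ l) (p ++ m) := by
  simpa using h.ctx p []

theorem Htpy.appR {l m : List E} (h : Htpy l m) (q : List E) : Htpy (l ++ q) (m ++ q) := by
  simpa using h.ctx [] q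

theorem htpy_dedup (p q : List E) (a : E) : Htpy (p ++ a :: a :: q) (p ++ a :: q) := by
  have h1 : Htpy (p ++ a :: a :: a :: q) (p ++ a :: a :: q) := Htpy.up p q a a a le_rfl le_rfl
  have h2 : Htpy (p ++ a :: a :: a :: q) (p ++ a :: q) := Htpy.backforth p q a a Comp.rfl
  exact h1.symm.trans h2

/-- Insert a lower bound between two comparable elements. -/
theorem htpy_insert (p q : List E) {u v y : E} (huv : Comp u v) (hu : y ≤ u) (hv : y ≤ v) :
    Htpy (p ++ u :: v :: q) (p ++ u :: y :: v :: q) := by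
  rcases huv with h | h
  · -- u ≤ v : u y v ∼ u y u v ∼ u v
    have h1 : Htpy ((p ++ [u]) ++ y :: u :: v :: q) ((p ++ [u]) ++ y :: v :: q) :=
      Htpy.up (p ++ [u]) q y u v hu h
    have h2 : Htpy (p ++ u :: y :: u :: (v :: q)) (p ++ u :: (v :: q)) :=
      Htpy.backforth p (v :: q) u y (Or.inr hu)
    simp only [List.append_assoc, List.cons_append, List.nil_append] at h1 h2 ⊢
    exact h2.symm.trans h1
  · -- v ≤ u : u y v ∼ u v y v ∼ u v
    have h1 : Htpy (p ++ u :: v :: y :: (v :: q)) (p ++ u :: y :: (v :: q)) :=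
      Htpy.down p (v :: q) u v y hv h
    have h2 : Htpy ((p ++ [u]) ++ v :: y :: v :: q) ((p ++ [u]) ++ v :: q) :=
      Htpy.backforth (p ++ [u]) q v y (Or.inr hv)
    simp only [List.append_assoc, List.cons_append, List.nil_append] at h1 h2 ⊢
    exact (h1.symm.trans h2).symm

/-- Replace the middle of a "zigzag" `m' u m''` by `w` when `m', m'' ≤ w ≤ u`. -/
theorem htpy_zig (p q : List E) {m' m'' w u : E} (h1 : m' ≤ w) (h2 : w ≤ u) (h3 : m'' ≤ w) :
    Htpy (p ++ m' :: u :: m'' :: q) (p ++ m' :: w :: m'' :: q) := by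
  have s1 : Htpy (p ++ m' :: w :: u :: (m'' :: q)) (p ++ m' :: u :: (m'' :: q)) :=
    Htpy.up p (m'' :: q) m' w u h1 h2
  have s2 : Htpy ((p ++ [m', w]) ++ u :: w :: m'' :: q) ((p ++ [m', w]) ++ u :: m'' :: q) :=
    Htpy.down (p ++ [m', w]) q u w m'' h3 h2
  have s3 : Htpy ((p ++ [m']) ++ w :: u :: w :: (m'' :: q)) ((p ++ [m']) ++ w :: (m'' :: q)) :=
    Htpy.backforth (p ++ [m']) (m'' :: q) w u (Or.inl h2)
  simp only [List.append_assoc, List.cons_append, List.nil_append] at s1 s2 s3 ⊢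
  exact s1.symm.trans (s2.symm.trans s3)

/-- Collapse: a path all of whose elements lie above `y` is homotopic to `[a, y, b]`. -/
theorem htpy_collapse {y : E} (l : List E) (hc : l.Chain' Comp) (hmem : ∀ z ∈ l, y ≤ z)
    {a b : E} (ha : l.head? = some a) (hb : l.getLast? = some b) : Htpy l [a, y, b] := by
  induction l generalizing a with
  | nil => simp at ha
  | cons c l ih =>
    simp only [List.head?_cons, Option.some.injEq] at ha; subst ha
    match l, hb with
    | [], hb =>
      simp only [List.getLast?_singleton, Option.some.injEq] at hb; subst hb
      have : Htpy ([] ++ c :: y :: c :: []) ([] ++ c :: ([] : List E)) :=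
        Htpy.backforth [] [] c y (Or.inr (hmem c (by simp)))
      simpa using this.symm
    | c₂ :: l, hb =>
      have hc' : (c₂ :: l).Chain' Comp := hc.tail
      have hcc : Comp c c₂ := (List.chain'_cons.mp hc).1
      have hb' : (c₂ :: l).getLast? = some b := by
        rw [← hb]; simp [List.getLast?_cons_cons]
      have ih : Htpy (c₂ :: l) [c₂, y, b] :=
        ih hc' (fun z hz => hmem z (by simp [hz])) rfl hb'
      have step1 : Htpy (c :: c₂ :: l) (c :: [c₂, y, b]) := ih.appL [c]
      have step2 : Htpy ([] ++ c :: c₂ :: ([y, b])) ([] ++ c :: y :: c₂ :: ([y, b])) :=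
        htpy_insert [] [y, b] hcc (hmem c (by simp)) (hmem c₂ (by simp))
      have step3 : Htpy (([c]) ++ y :: c₂ :: y :: [b]) (([c]) ++ y :: [b]) :=
        Htpy.backforth [c] [b] y c₂ (Or.inl (hmem c₂ (by simp)))
      simp only [List.append_assoc, List.cons_append, List.nil_append] at step2 step3 ⊢
      exact step1.trans (step2.trans step3)

theorem Htpy.map {F : Type*} [Preorder F] {g : E → F} (hg : Monotone g) {l m : List E}
    (h : Htpy l m) : Htpy (l.map g) (m.map g) := by
  induction h with
  | refl l => exact .refl _
  | symm _ ih => exact ih.symm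
  | trans _ _ ih1 ih2 => exact ih1.trans ih2
  | up p q x y z h1 h2 => simpa using Htpy.up (p.map g) (q.map g) _ _ _ (hg h1) (hg h2)
  | down p q x y z h1 h2 => simpa using Htpy.down (p.map g) (q.map g) _ _ _ (hg h1) (hg h2)
  | backforth p q x y h1 =>
      simpa using Htpy.backforth (p.map g) (q.map g) (g x) (g y)
        (h1.imp (fun h => hg h) (fun h => hg h))

end Basic

section Invariants
variable [Preorder E]

theorem Htpy.head?_eq {l m : List E} (h : Htpy l m) : l.head? = m.head? := by
  induction h with
  | refl l => rfl
  | symm _ ih => exact ih.symm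
  | trans _ _ ih1 ih2 => exact ih1.trans ih2
  | up p q x y z _ _ => cases p <;> simp
  | down p q x y z _ _ => cases p <;> simp
  | backforth p q x y _ => cases p <;> simp

theorem Htpy.getLast?_eq {l m : List E} (h : Htpy l m) : l.getLast? = m.getLast? := by
  induction h with
  | refl l => rfl
  | symm _ ih => exact ih.symm
  | trans _ _ ih1 ih2 => exact ih1.trans ih2
  | up p q x y z _ _ =>
      rcases q.eq_nil_or_concat with rfl | ⟨q', e, rfl⟩ <;>
        simp [List.getLast?_append, List.getLast?_concat]
  | down p q x y z _ _ =>
      rcases q.eq_nil_or_concat with rfl | ⟨q', e, rfl⟩ <;>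
        simp [List.getLast?_append, List.getLast?_concat]
  | backforth p q x y _ =>
      rcases q.eq_nil_or_concat with rfl | ⟨q', e, rfl⟩ <;>
        simp [List.getLast?_append, List.getLast?_concat]

theorem Htpy.ne_nil {l m : List E} (h : Htpy l m) (hl : l ≠ []) : m ≠ [] := by
  intro hm
  rw [← List.head?_eq_none_iff] at hm
  rw [← h.head?_eq, List.head?_eq_none_iff] at hm
  exact hl hm

theorem chain'_middle {p q m m' : List E} (hm' : m'.Chain' Comp) (hne : m ≠ []) (hne' : m' ≠ [])
    (hh : m.head? = m'.head?) (hl : m.getLast? = m'.getLast?)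
    (h : (p ++ m ++ q).Chain' Comp) : (p ++ m' ++ q).Chain' Comp := by
  rw [List.append_assoc, List.chain'_append] at h ⊢
  obtain ⟨hp, hmq, hj⟩ := h
  rw [List.chain'_append] at hmq ⊢
  refine ⟨hp, ⟨hm', hmq.2.1, ?_⟩, ?_⟩
  · intro u hu v hv
    exact hmq.2.2 u (by rw [hl]; exact hu) v hv
  · intro u hu v hv
    refine hj u hu v ?_
    rw [List.head?_append_of_ne_nil _ hne'] at hv
    rw [List.head?_append_of_ne_nil _ hne, hh]
    exact hv

theorem Htpy.chain'_iff {l m : List E} (h : Htpy l m) : l.Chain' Comp ↔ m.Chain' Comp := by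
  induction h with
  | refl l => rfl
  | symm _ ih => exact ih.symm
  | trans _ _ ih1 ih2 => exact ih1.trans ih2
  | up p q x y z h1 h2 =>
      constructor
      · intro hch
        have := chain'_middle (p := p) (q := q) (m := [x, y, z]) (m' := [x, z])
          (by simp only [List.chain'_cons, List.chain'_singleton, and_true]
              exact Or.inl (h1.trans h2))
          (by simp) (by simp) rfl (by simp) (by simpa using hch)
        simpa using this
      · intro hch
        have := chain'_middle (p := p) (q := q) (m := [x, z]) (m' := [x, y, z])
          (by simp only [List.chain'_cons, List.chain'_singleton, and_true]
              exact ⟨Or.inl h1, Or.inl h2⟩)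
          (by simp) (by simp) rfl (by simp) (by simpa using hch)
        simpa using this
  | down p q x y z h1 h2 =>
      constructor
      · intro hch
        have := chain'_middle (p := p) (q := q) (m := [x, y, z]) (m' := [x, z])
          (by simp only [List.chain'_cons, List.chain'_singleton, and_true]
              exact Or.inr (h1.trans h2))
          (by simp) (by simp) rfl (by simp) (by simpa using hch)
        simpa using this
      · intro hch
        have := chain'_middle (p := p) (q := q) (m := [x, z]) (m' := [x, y, z])
          (by simp only [List.chain'_cons, List.chain'_singleton, and_true]
              exact ⟨Or.inr h2, Or.inr h1⟩)
          (by simp) (by simp) rfl (by simp) (by simpa using hch)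
        simpa using this
  | backforth p q x y h1 =>
      constructor
      · intro hch
        have := chain'_middle (p := p) (q := q) (m := [x, y, x]) (m' := [x])
          (by simp) (by simp) (by simp) rfl (by simp) (by simpa using hch)
        simpa using this
      · intro hch
        have := chain'_middle (p := p) (q := q) (m := [x]) (m' := [x, y, x])
          (by simp only [List.chain'_cons, List.chain'_singleton, and_true]
              exact ⟨h1, h1.symm'⟩)
          (by simp) (by simp) rfl (by simp) (by simpa using hch)
        simpa using this

end Invariants

section SimplyConn
variable [Preorder E]

theorem chain'_reverse_comp {l : List E} (h : l.Chain' Comp) : l.reverse.Chain' Comp := by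
  rw [List.chain'_reverse]
  exact List.Chain'.imp (fun a b hab => Or.symm hab) h

/-- Going along a path and back is homotopic to the constant path. -/
theorem htpy_cancel (l : List E) (hc : l.Chain' Comp) {a : E} (ha : l.head? = some a) :
    Htpy (l ++ l.reverse.tail) [a] := by
  induction l generalizing a with
  | nil => simp at ha
  | cons c l ih =>
    simp only [List.head?_cons, Option.some.injEq] at ha; subst ha
    match l with
    | [] => simpa using Htpy.refl [c]
    | c₂ :: l =>
      have hcc : Comp c c₂ := (List.chain'_cons.mp hc).1
      have ih : Htpy ((c₂ :: l) ++ (c₂ :: l).reverse.tail) [c₂] :=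
        ih hc.tail rfl
      have e1 : (c :: c₂ :: l) ++ (c :: c₂ :: l).reverse.tail
          = [c] ++ ((c₂ :: l) ++ (c₂ :: l).reverse.tail) ++ [c] := by
        rcases e : l.reverse with _ | ⟨t, L⟩ <;> simp [e]
      rw [e1]
      have step1 : Htpy ([c] ++ ((c₂ :: l) ++ (c₂ :: l).reverse.tail) ++ [c])
          ([c] ++ [c₂] ++ [c]) := ih.ctx [c] [c]
      have step2 : Htpy ([] ++ c :: c₂ :: c :: []) ([] ++ c :: ([] : List E)) :=
        Htpy.backforth [] [] c c₂ hcc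
      simp only [List.append_assoc, List.cons_append, List.nil_append] at step1 step2 ⊢
      exact step1.trans step2

/-- In a simply connected poset, any two paths with the same endpoints are homotopic. -/
theorem htpy_of_simplyConnected (hsc : SimplyConnected E) {l l' : List E} {a b : E}
    (h : IsPath l a b) (h' : IsPath l' a b) : Htpy l l' := by
  obtain ⟨ha, hb, hc⟩ := h
  obtain ⟨ha', hb', hc'⟩ := h'
  have hlne : l ≠ [] := by intro e; subst e; simp at ha
  have hlne' : l' ≠ [] := by intro e; subst e; simp at ha'
  obtain ⟨z, r', hr⟩ := List.exists_cons_of_ne_nil (show l'.reverse ≠ [] by simpa)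
  have hz : z = b := by
    have : l'.reverse.head? = some b := by rw [List.head?_reverse]; exact hb'
    rw [hr] at this; simpa using this
  rw [hz] at hr
  clear hz
  have hrlast : (b :: r').getLast? = some a := by
    rw [← hr, List.getLast?_reverse]; exact ha'
  have hrchain : (b :: r').Chain' Comp := by rw [← hr]; exact chain'_reverse_comp hc'
  have hloop : IsPath (l ++ r') a a := by
    refine ⟨?_, ?_, ?_⟩
    · rw [List.head?_append_of_ne_nil _ hlne]; exact ha
    · match r', hrlast with
      | [], hrl => simpa [hb] using hrl
      | v :: r', hrl =>
        rw [List.getLast?_append_of_ne_nil _ (by simp)]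
        rw [← hrl]; simp [List.getLast?_cons_cons]
    · rw [List.chain'_append]
      refine ⟨hc, hrchain.tail, ?_⟩
      intro u hu v hv
      have h1 : Comp b v := (List.chain'_cons'.mp hrchain).1 v hv
      rw [hb, Option.mem_some_iff] at hu; subst hu
      exact h1
  have hHloop : Htpy (l ++ r') [a] := hsc.2 a _ hloop
  have key1 : Htpy ((b :: r') ++ l'.tail) [b] := by
    have := htpy_cancel l'.reverse (chain'_reverse_comp hc') (by rw [List.head?_reverse]; exact hb')
    rw [List.reverse_reverse] at this
    rw [hr] at this
    exact this
  obtain ⟨l₀, rfl⟩ : ∃ l₀, l = l₀ ++ [b] := by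
    rcases l.eq_nil_or_concat with rfl | ⟨l₀, e, rfl⟩
    · simp at ha
    · simp only [List.concat_eq_append] at hb ⊢
      rw [List.getLast?_append_of_ne_nil _ (by simp)] at hb
      simp only [List.getLast?_singleton, Option.some.injEq] at hb
      exact ⟨l₀, by rw [hb]⟩
  obtain ⟨w, t', rfl⟩ := List.exists_cons_of_ne_nil hlne'
  have hw : w = a := by simpa using ha'
  subst hw
  have step1 : Htpy (l₀ ++ ((b :: r') ++ (w :: t').tail)) (l₀ ++ [b]) := key1.appL l₀
  have step2 : Htpy (((l₀ ++ [b]) ++ r') ++ (w :: t').tail) ([w] ++ (w :: t').tail) :=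
    hHloop.appR (w :: t').tail
  have e2 : ((l₀ ++ [b]) ++ r') ++ (w :: t').tail = l₀ ++ ((b :: r') ++ (w :: t').tail) := by
    simp
  rw [e2] at step2
  have e3 : [w] ++ (w :: t').tail = w :: t' := by simp
  rw [e3] at step2
  exact step1.symm.trans step2

end SimplyConn


section Lifts

variable {X Y : Type*} [Preorder X] [Preorder Y]

/-- `Lifts f γ δ` : `δ` is a lift of the path `γ` along `f`, i.e. it is obtained by choosing a
point in the fiber over each vertex of `γ` and connecting consecutive choices inside the fiber
of the smaller of the two vertices. -/
inductive Lifts (f : X → Y) : List Y → List X → Prop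
  | single (y : Y) (δ : List X) : δ ≠ [] → δ.Chain' Comp → (∀ z ∈ δ, y ≤ f z) → Lifts f [y] δ
  | cons (y y' m : Y) (γ : List Y) (p δ : List X) (x' x : X) :
      m ≤ y → m ≤ y' → (m = y ∨ m = y') →
      Lifts f (y' :: γ) (x' :: δ) →
      (p ++ [x']).Chain' Comp →
      (∀ z ∈ p ++ [x'], m ≤ f z) →
      (p ++ [x']).head? = some x → y ≤ f x →
      Lifts f (y :: y' :: γ) (p ++ x' :: δ)

variable {f : X → Y}

theorem Lifts.ne_nil {γ : List Y} {δ : List X} (h : Lifts f γ δ) : δ ≠ [] := by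
  induction h with
  | single y δ h1 h2 h3 => exact h1
  | cons => simp

omit [Preorder X] in
theorem head?_append_cons (p : List X) (x' : X) (δ : List X) :
    (p ++ x' :: δ).head? = (p ++ [x']).head? := by
  cases p <;> simp

theorem Lifts.head_le {γ : List Y} {δ : List X} (h : Lifts f γ δ) {y : Y} {x : X}
    (hy : γ.head? = some y) (hx : δ.head? = some x) : y ≤ f x := by
  induction h with
  | single y' δ h1 h2 h3 =>
      simp only [List.head?_cons, Option.some.injEq] at hy; subst hy
      exact h3 x (List.mem_of_mem_head? hx)
  | cons y y' m γ p δ x' x₀ hm1 hm2 hm3 hl hch hmem hh hle ih =>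
      simp only [List.head?_cons, Option.some.injEq] at hy; subst hy
      rw [head?_append_cons, hh] at hx
      simp only [Option.some.injEq] at hx; subst hx
      exact hle

theorem Lifts.last_le {γ : List Y} {δ : List X} (h : Lifts f γ δ) {y : Y} {x : X}
    (hy : γ.getLast? = some y) (hx : δ.getLast? = some x) : y ≤ f x := by
  induction h with
  | single y' δ h1 h2 h3 =>
      simp only [List.getLast?_singleton, Option.some.injEq] at hy; subst hy
      exact h3 x (List.mem_of_mem_getLast? hx)
  | cons y y' m γ p δ x' x₀ hm1 hm2 hm3 hl hch hmem hh hle ih =>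
      rw [List.getLast?_cons_cons] at hy
      rw [List.getLast?_append_of_ne_nil _ (by simp)] at hx
      exact ih hy hx

theorem Lifts.chain' {γ : List Y} {δ : List X} (h : Lifts f γ δ) : δ.Chain' Comp := by
  induction h with
  | single y δ h1 h2 h3 => exact h2
  | cons y y' m γ p δ x' x₀ hm1 hm2 hm3 hl hch hmem hh hle ih =>
      rw [List.chain'_append] at hch ⊢
      refine ⟨hch.1, ih, ?_⟩
      intro u hu v hv
      simp only [List.head?_cons, Option.mem_some_iff] at hv; subst hv
      exact hch.2.2 u hu x' (by simp)

theorem Lifts.chainY {γ : List Y} {δ : List X} (h : Lifts f γ δ) : γ.Chain' Comp := by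
  induction h with
  | single y δ h1 h2 h3 => simp
  | cons y y' m γ p δ x' x₀ hm1 hm2 hm3 hl hch hmem hh hle ih =>
      rw [List.chain'_cons]
      refine ⟨?_, ih⟩
      rcases hm3 with rfl | rfl
      · exact Or.inl hm2
      · exact Or.inr hm1

theorem Lifts.lb {γ : List Y} {δ : List X} (h : Lifts f γ δ) {m₀ : Y}
    (hm₀ : ∀ w ∈ γ, m₀ ≤ w) : ∀ z ∈ δ, m₀ ≤ f z := by
  induction h with
  | single y δ h1 h2 h3 =>
      intro z hz
      exact le_trans (hm₀ y (by simp)) (h3 z hz)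
  | cons y y' m γ p δ x' x₀ hm1 hm2 hm3 hl hch hmem hh hle ih =>
      intro z hz
      have hm₀m : m₀ ≤ m := by
        rcases hm3 with rfl | rfl
        · exact hm₀ m (by simp)
        · exact hm₀ m (by simp)
      rcases List.mem_append.mp hz with hz | hz
      · exact le_trans hm₀m (hmem z (by simp [hz]))
      · exact ih (fun w hw => hm₀ w (by simp at hw ⊢; tauto)) z hz

/-- Transfer a connectivity statement about the fiber to paths in `X`. -/
theorem fiber_path {y : Y} (hconn : Connected {x : X // y ≤ f x}) {a b : X}
    (ha : y ≤ f a) (hb : y ≤ f b) :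
    ∃ l : List X, l.Chain' Comp ∧ (∀ z ∈ l, y ≤ f z) ∧ l.head? = some a ∧
      l.getLast? = some b := by
  obtain ⟨ls, h1, h2, h3⟩ := hconn ⟨a, ha⟩ ⟨b, hb⟩
  refine ⟨ls.map Subtype.val, ?_, ?_, ?_, ?_⟩
  · exact List.chain'_map_of_chain' _ (fun u v huv => huv.imp (fun h => h) (fun h => h)) h3
  · intro z hz
    obtain ⟨u, hu, rfl⟩ := List.mem_map.mp hz
    exact u.2
  · rw [List.head?_map, h1]; rfl
  · rw [List.getLast?_map, h2]; rfl

/-- Transfer simple connectivity of a fiber to paths in `X`. -/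
theorem fiber_htpy {y : Y} (hsc : SimplyConnected {x : X // y ≤ f x}) {l l' : List X} {a b : X}
    (hl : ∀ z ∈ l, y ≤ f z) (hl' : ∀ z ∈ l', y ≤ f z)
    (hc : l.Chain' Comp) (hc' : l'.Chain' Comp)
    (hh : l.head? = some a) (hh' : l'.head? = some a)
    (he : l.getLast? = some b) (he' : l'.getLast? = some b) : Htpy l l' := by
  have hafib : y ≤ f a := hl a (List.mem_of_mem_head? hh)
  have hbfib : y ≤ f b := hl b (List.mem_of_mem_getLast? he)
  set P : X → Prop := fun z => y ≤ f z with hP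
  have key : ∀ (l : List X) (hmem : ∀ z ∈ l, P z), l.Chain' Comp → l.head? = some a →
      l.getLast? = some b → IsPath (l.attachWith P hmem) ⟨a, hafib⟩ ⟨b, hbfib⟩ := by
    intro l hmem hch hhd hlast
    have hval : (l.attachWith P hmem).map Subtype.val = l := l.attachWith_map_subtype_val hmem
    refine ⟨?_, ?_, ?_⟩
    · have := congrArg List.head? hval
      rw [List.head?_map, hhd] at this
      obtain ⟨u, hu, hu2⟩ := Option.map_eq_some_iff.mp this
      rw [hu]
      exact congrArg some (Subtype.ext hu2)
    · have := congrArg List.getLast? hval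
      rw [List.getLast?_map, hlast] at this
      obtain ⟨u, hu, hu2⟩ := Option.map_eq_some_iff.mp this
      rw [hu]
      exact congrArg some (Subtype.ext hu2)
    · rw [← hval] at hch
      rw [List.chain'_map] at hch
      exact hch.imp (fun u v huv => huv)
  have h1 := key l hl hc hh he
  have h2 := key l' hl' hc' hh' he'
  have := htpy_of_simplyConnected hsc h1 h2
  have hmap := this.map (g := (Subtype.val : {x : X // y ≤ f x} → X)) (fun _ _ h => h)
  rwa [l.attachWith_map_subtype_val hl, l'.attachWith_map_subtype_val hl'] at hmap

end Lifts


section Lifts2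

variable {X Y : Type*} [Preorder X] [Preorder Y] {f : X → Y}

omit [Preorder X] in
theorem eq_dropLast_concat {l : List X} {c : X} (h : l.getLast? = some c) :
    l = l.dropLast ++ [c] := by
  rcases l.eq_nil_or_concat with rfl | ⟨l₀, e, rfl⟩
  · simp at h
  · simp only [List.concat_eq_append] at h ⊢
    rw [List.getLast?_append_of_ne_nil _ (by simp)] at h
    simp only [List.getLast?_singleton, Option.some.injEq] at h
    subst h
    rw [List.dropLast_append_of_ne_nil (by simp)]
    simp

/-- Existence of lifts with prescribed endpoints. -/
theorem lifts_exists (hfib : ∀ y : Y, Nonempty {x : X // y ≤ f x} ∧ Connected {x : X // y ≤ f x})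
    {γ : List Y} (hch : γ.Chain' Comp) {yh yl : Y}
    (hh : γ.head? = some yh) (hl : γ.getLast? = some yl) {a b : X}
    (ha : yh ≤ f a) (hb : yl ≤ f b) :
    ∃ δ, Lifts f γ δ ∧ δ.head? = some a ∧ δ.getLast? = some b := by
  induction γ generalizing yh a with
  | nil => simp at hh
  | cons y γt ih =>
    simp only [List.head?_cons, Option.some.injEq] at hh; subst hh
    match γt, hl, hch with
    | [], hl, hch =>
      simp only [List.getLast?_singleton, Option.some.injEq] at hl; subst hl
      obtain ⟨l, h1, h2, h3, h4⟩ := fiber_path (hfib y).2 ha hb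
      exact ⟨l, Lifts.single y l (by intro e; subst e; simp at h3) h1 h2, h3, h4⟩
    | y' :: γt, hl, hch =>
      obtain ⟨x₁, hx₁⟩ := (hfib y').1
      have hl' : (y' :: γt).getLast? = some yl := by rw [← hl]; simp [List.getLast?_cons_cons]
      obtain ⟨δ', hδ', hh', hl''⟩ := ih hch.tail rfl hl' hx₁
      obtain ⟨x₁', t, rfl⟩ : ∃ x₁' t, δ' = x₁' :: t := by
        rcases δ' with _ | ⟨u, t⟩
        · simp at hh'
        · exact ⟨u, t, rfl⟩
      have hx₁'' : y' ≤ f x₁' := by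
        have : x₁' = x₁ := by simpa using hh'
        rw [this]; exact hx₁
      have hcomp : Comp y y' := (List.chain'_cons.mp hch).1
      obtain ⟨m, hm1, hm2, hm3⟩ : ∃ m, m ≤ y ∧ m ≤ y' ∧ (m = y ∨ m = y') := by
        rcases hcomp with h | h
        · exact ⟨y, le_rfl, h, Or.inl rfl⟩
        · exact ⟨y', h, le_rfl, Or.inr rfl⟩
      obtain ⟨q, hq1, hq2, hq3, hq4⟩ := fiber_path (hfib m).2 (le_trans hm1 ha)
        (le_trans hm2 hx₁'')
      obtain ⟨q₀, e, rfl⟩ : ∃ q₀ e, q = q₀ ++ [e] := by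
        rcases q.eq_nil_or_concat with rfl | ⟨q₀, e, rfl⟩
        · simp at hq3
        · exact ⟨q₀, e, by simp⟩
      have he : e = x₁' := by
        rw [List.getLast?_append_of_ne_nil _ (by simp)] at hq4
        simpa using hq4
      rw [← he] at hδ' hx₁'' hl''
      refine ⟨q₀ ++ e :: t, ?_, ?_, ?_⟩
      · exact Lifts.cons y y' m γt q₀ t e a hm1 hm2 hm3 hδ' hq1 hq2 hq3 ha
      · rw [head?_append_cons]; exact hq3
      · rw [List.getLast?_append_of_ne_nil _ (by simp)]
        exact hl''

/-- A path in `X` is a lift of its own image. -/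
theorem lifts_self (hf : Monotone f) {δ : List X} (hch : δ.Chain' Comp) (hne : δ ≠ []) :
    Lifts f (δ.map f) δ := by
  induction δ with
  | nil => simp at hne
  | cons x δt ih =>
    match δt, hch with
    | [], _ => exact Lifts.single (f x) [x] (by simp) (by simp) (by simp)
    | x' :: t, hch =>
      have ihl : Lifts f ((x' :: t).map f) (x' :: t) := ih hch.tail (by simp)
      have hcomp : Comp x x' := (List.chain'_cons.mp hch).1
      rcases hcomp with h | h
      · have := Lifts.cons (f x) (f x') (f x) ((t).map f) [x] t x' x le_rfl (hf h)
          (Or.inl rfl) ihl (List.chain'_cons.mpr ⟨Or.inl h, List.chain'_singleton x'⟩)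
          (by intro z hz; simp at hz; rcases hz with rfl | rfl; exacts [le_rfl, hf h])
          (by simp) le_rfl
        simpa using this
      · have := Lifts.cons (f x) (f x') (f x') ((t).map f) [x] t x' x (hf h) le_rfl
          (Or.inr rfl) ihl (List.chain'_cons.mpr ⟨Or.inr h, List.chain'_singleton x'⟩)
          (by intro z hz; simp at hz; rcases hz with rfl | rfl; exacts [hf h, le_rfl])
          (by simp) le_rfl
        simpa using this

/-- Prepend a path lying in the fiber of the head vertex to a lift. -/
theorem Lifts.prepend {y : Y} {γ : List Y} {δ : List X}
    (h : Lifts f (y :: γ) δ) {x' : X} (hx' : δ.head? = some x') (r : List X)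
    (hrch : (r ++ [x']).Chain' Comp) (hrmem : ∀ z ∈ r ++ [x'], y ≤ f z) :
    Lifts f (y :: γ) (r ++ δ) := by
  rcases r with _ | ⟨w, r'⟩
  · simpa using h
  have hjunc : ∀ u ∈ (w :: r').getLast?, Comp u x' := by
    intro u hu
    rw [List.chain'_append] at hrch
    exact hrch.2.2 u hu x' (by simp)
  have hrch' : (w :: r').Chain' Comp := by
    rw [List.chain'_append] at hrch
    exact hrch.1
  cases h with
  | single _ δ h1 h2 h3 =>
      refine Lifts.single y _ (by simp) ?_ ?_
      · rw [List.chain'_append]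
        refine ⟨hrch', h2, ?_⟩
        intro u hu v hv
        rw [hx'] at hv
        have := Option.mem_some_iff.mp hv
        subst this
        exact hjunc u hu
      · intro z hz
        rcases List.mem_append.mp hz with hz | hz
        · exact hrmem z (List.mem_append.mpr (Or.inl hz))
        · exact h3 z hz
  | cons y y' m γt p δ₀ x₂ x hm1 hm2 hm3 hlf hch hmem hhd hle =>
      have hx : x = x' := by
        rw [head?_append_cons, hhd] at hx'
        simpa using hx'
      subst hx
      have goal := Lifts.cons y y' m γt ((w :: r') ++ p) δ₀ x₂ w hm1 hm2 hm3 hlf ?_ ?_ ?_ ?_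
      · simpa using goal
      · -- chain'
        have : (w :: r') ++ p ++ [x₂] = (w :: r') ++ (p ++ [x₂]) := by simp
        rw [this, List.chain'_append]
        refine ⟨hrch', hch, ?_⟩
        intro u hu v hv
        rw [hhd] at hv
        have := Option.mem_some_iff.mp hv
        subst this
        exact hjunc u hu
      · intro z hz
        have : z ∈ (w :: r') ++ (p ++ [x₂]) := by simpa using hz
        rcases List.mem_append.mp this with hz' | hz'
        · exact le_trans hm1 (hrmem z (List.mem_append.mpr (Or.inl hz')))
        · exact hmem z hz'
      · simp
      · exact hrmem w (by simp)

end Lifts2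


section Lifts3

variable {X Y : Type*} [Preorder X] [Preorder Y] {f : X → Y}

omit [Preorder X] in
theorem eq_cons_of_head? {l : List X} {a : X} (h : l.head? = some a) : ∃ t, l = a :: t := by
  rcases l with _ | ⟨b, t⟩
  · simp at h
  · simp only [List.head?_cons, Option.some.injEq] at h
    exact ⟨t, by rw [h]⟩

/-- Glue two lifts sharing an endpoint. -/
theorem Lifts.glue : ∀ {γ₁ : List Y} {w : Y} {γ₂ : List Y} {d₁ : List X} {c : X} {δ₂ : List X},
    Lifts f (γ₁ ++ [w]) d₁ → d₁.getLast? = some c → Lifts f (w :: γ₂) (c :: δ₂) →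
    Lifts f (γ₁ ++ w :: γ₂) (d₁.dropLast ++ c :: δ₂) := by
  intro γ₁
  induction γ₁ with
  | nil =>
    intro w γ₂ d₁ c δ₂ h1 hlast h2
    simp only [List.nil_append] at h1 ⊢
    cases h1 with
    | single _ _ hne hch hmem =>
      have hd₁ : d₁ = d₁.dropLast ++ [c] := eq_dropLast_concat hlast
      refine h2.prepend (x' := c) rfl d₁.dropLast ?_ ?_
      · rw [← hd₁]; exact hch
      · intro z hz
        exact hmem z (by rw [hd₁]; exact hz)
  | cons v γ₁' ih =>
    intro w γ₂ d₁ c δ₂ h1 hlast h2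
    simp only [List.cons_append] at h1 ⊢
    obtain ⟨v', rest, e⟩ : ∃ v' rest, γ₁' ++ [w] = v' :: rest := by
      rcases ee : γ₁' ++ [w] with _ | ⟨v', rest⟩
      · simp at ee
      · exact ⟨v', rest, rfl⟩
    rw [e] at h1
    cases h1 with
    | cons yy yy' m γt p δ₀ x₂ x hm1 hm2 hm3 hlf hch hmem hhd hle =>
      rw [← e] at hlf
      have hlast' : (x₂ :: δ₀).getLast? = some c := by
        rw [List.getLast?_append_of_ne_nil _ (by simp)] at hlast
        exact hlast
      have core := ih (w := w) (γ₂ := γ₂) hlf hlast' h2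
      have hd : ((x₂ :: δ₀).dropLast ++ c :: δ₂).head? = some x₂ := by
        rw [head?_append_cons, ← eq_dropLast_concat hlast']
        simp
      obtain ⟨t, ht⟩ := eq_cons_of_head? hd
      rw [ht] at core
      have hd2 : (γ₁' ++ w :: γ₂).head? = some v' := by
        rw [head?_append_cons, e]; simp
      obtain ⟨rest', e'⟩ := eq_cons_of_head? hd2
      rw [e'] at core
      have goal := Lifts.cons v v' m rest' p t x₂ x hm1 hm2 hm3 core hch hmem hhd hle
      have e3 : p ++ x₂ :: t = (p ++ x₂ :: δ₀).dropLast ++ c :: δ₂ := by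
        rw [List.dropLast_append_of_ne_nil (by simp), List.append_assoc, ← ht]
      rw [e3] at goal
      rw [← e'] at goal
      exact goal

/-- Split a lift at a vertex. -/
theorem Lifts.split : ∀ {γ₁ : List Y} {w : Y} {γ₂ : List Y} {δ : List X},
    Lifts f (γ₁ ++ w :: γ₂) δ →
    ∃ d₁ c δ₂, δ = d₁ ++ c :: δ₂ ∧ Lifts f (γ₁ ++ [w]) (d₁ ++ [c]) ∧
      Lifts f (w :: γ₂) (c :: δ₂) := by
  intro γ₁
  induction γ₁ with
  | nil =>
    intro w γ₂ δ h
    obtain ⟨c, δ₂, rfl⟩ : ∃ c δ₂, δ = c :: δ₂ := by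
      rcases δ with _ | ⟨c, δ₂⟩
      · exact absurd rfl h.ne_nil
      · exact ⟨c, δ₂, rfl⟩
    refine ⟨[], c, δ₂, by simp, ?_, by simpa using h⟩
    refine Lifts.single w [c] (by simp) (by simp) ?_
    intro z hz
    simp only [List.mem_singleton] at hz; subst hz
    exact h.head_le (by simp) (by simp)
  | cons v γ₁' ih =>
    intro w γ₂ δ h
    simp only [List.cons_append] at h
    obtain ⟨v', rest, e⟩ : ∃ v' rest, γ₁' ++ w :: γ₂ = v' :: rest := by
      rcases ee : γ₁' ++ w :: γ₂ with _ | ⟨v', rest⟩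
      · simp at ee
      · exact ⟨v', rest, rfl⟩
    rw [e] at h
    cases h with
    | cons yy yy' m γt p δ₀ x₂ x hm1 hm2 hm3 hlf hch hmem hhd hle =>
      rw [← e] at hlf
      obtain ⟨d₁', c, δ₂, hdec, hp1, hp2⟩ := ih hlf
      obtain ⟨t, ht⟩ : ∃ t, d₁' ++ [c] = x₂ :: t := by
        refine eq_cons_of_head? ?_
        rw [← head?_append_cons d₁' c δ₂, ← hdec]
        simp
      rw [ht] at hp1
      have hd2 : (γ₁' ++ [w]).head? = some v' := by
        rw [← head?_append_cons γ₁' w γ₂, e]; simp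
      obtain ⟨rest2, e2⟩ := eq_cons_of_head? hd2
      rw [e2] at hp1
      have piece1 := Lifts.cons v v' m rest2 p t x₂ x hm1 hm2 hm3 hp1 hch hmem hhd hle
      rw [← e2] at piece1
      refine ⟨p ++ d₁', c, δ₂, ?_, ?_, hp2⟩
      · rw [hdec, List.append_assoc]
      · rw [List.append_assoc, ht]
        exact piece1

end Lifts3


section Lifts4

variable {X Y : Type*} [Preorder X] [Preorder Y] {f : X → Y}

theorem Lifts.cons_inv {y y' : Y} {γt : List Y} {δ : List X} (h : Lifts f (y :: y' :: γt) δ) :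
    ∃ m p δ₀ x' x, δ = p ++ x' :: δ₀ ∧ m ≤ y ∧ m ≤ y' ∧ (m = y ∨ m = y') ∧
      Lifts f (y' :: γt) (x' :: δ₀) ∧ (p ++ [x']).Chain' Comp ∧
      (∀ z ∈ p ++ [x'], m ≤ f z) ∧ (p ++ [x']).head? = some x ∧ y ≤ f x := by
  cases h with
  | cons y y' m γ p δ x' x h1 h2 h3 h4 h5 h6 h7 h8 =>
    exact ⟨m, p, δ, x', x, rfl, h1, h2, h3, h4, h5, h6, h7, h8⟩

omit [Preorder X] in
theorem head?_append_eq {p r : List X} {x₁ : X} (h : r.head? = some x₁) :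
    (p ++ r).head? = (p ++ [x₁]).head? := by
  cases p
  · simpa using h
  · simp

/-- The image of a lift of `γ` is homotopic to `γ` with the `f`-images of the endpoints
of the lift added at the two ends. -/
theorem Lifts.htpy_map (hf : Monotone f) {γ : List Y} {δ : List X} (h : Lifts f γ δ)
    {a b : X} (ha : δ.head? = some a) (hb : δ.getLast? = some b) :
    Htpy (δ.map f) (f a :: (γ ++ [f b])) := by
  induction h generalizing a b with
  | single y δ hne hch hmem =>
    have hcol := htpy_collapse (y := y) (δ.map f)
      (List.chain'_map_of_chain' f (fun u v huv => huv.imp (fun h => hf h) (fun h => hf h)) hch)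
      (by intro z hz
          obtain ⟨u, hu, rfl⟩ := List.mem_map.mp hz
          exact hmem u hu)
      (a := f a) (b := f b)
      (by rw [List.head?_map, ha]; rfl)
      (by rw [List.getLast?_map, hb]; rfl)
    simpa using hcol
  | cons y y' m γt p δ₀ x' x hm1 hm2 hm3 hlf hch hmem hhd hle ih =>
    -- identify the endpoints
    have hax : x = a := by
      rw [head?_append_cons, hhd] at ha
      simpa using ha
    subst hax
    have hb' : (x' :: δ₀).getLast? = some b := by
      rw [List.getLast?_append_of_ne_nil _ (by simp)] at hb
      exact hb
    have IH : Htpy ((x' :: δ₀).map f) (f x' :: ((y' :: γt) ++ [f b])) := ih rfl hb'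
    have hy'x' : y' ≤ f x' := hlf.head_le (by simp) (by simp)
    -- collapse the image of the connecting path
    have part1 : Htpy ((p ++ [x']).map f) [f x, m, f x'] :=
      htpy_collapse _
        (List.chain'_map_of_chain' f (fun u v huv => huv.imp (fun h => hf h) (fun h => hf h)) hch)
        (by intro z hz
            obtain ⟨u, hu, rfl⟩ := List.mem_map.mp hz
            exact hmem u hu)
        (by rw [List.head?_map, hhd]; rfl)
        (by rw [List.getLast?_map]; simp)
    have step1 : Htpy (((p ++ [x']).map f) ++ (δ₀.map f)) ([f x, m, f x'] ++ (δ₀.map f)) :=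
      part1.appR _
    have e1 : (p ++ x' :: δ₀).map f = ((p ++ [x']).map f) ++ (δ₀.map f) := by simp
    have step2 : Htpy ([f x, m] ++ ((x' :: δ₀).map f))
        ([f x, m] ++ (f x' :: ((y' :: γt) ++ [f b]))) := IH.appL [f x, m]
    have step3 : Htpy ([f x] ++ m :: f x' :: y' :: (γt ++ [f b]))
        ([f x] ++ m :: y' :: y' :: (γt ++ [f b])) :=
      htpy_zig [f x] (γt ++ [f b]) hm2 hy'x' le_rfl
    have step4 : Htpy ([f x, m] ++ y' :: y' :: (γt ++ [f b]))
        ([f x, m] ++ y' :: (γt ++ [f b])) := htpy_dedup [f x, m] (γt ++ [f b]) y'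
    -- combine
    have main : Htpy ((p ++ x' :: δ₀).map f) (f x :: m :: y' :: (γt ++ [f b])) := by
      rw [e1]
      refine step1.trans ?_
      have e2 : [f x, m, f x'] ++ (δ₀.map f) = [f x, m] ++ ((x' :: δ₀).map f) := by simp
      rw [e2]
      refine step2.trans ?_
      refine ?_
      have e3 : [f x, m] ++ (f x' :: ((y' :: γt) ++ [f b]))
          = [f x] ++ m :: f x' :: y' :: (γt ++ [f b]) := by simp
      rw [e3]
      refine step3.trans ?_
      have e4 : [f x] ++ m :: y' :: y' :: (γt ++ [f b])
          = [f x, m] ++ y' :: y' :: (γt ++ [f b]) := by simp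
      rw [e4]
      refine step4.trans ?_
      simp only [List.cons_append, List.nil_append]
      exact Htpy.refl _
    rcases hm3 with rfl | rfl
    · simpa using main
    · -- m = y' : remove the duplicate y' and reinsert y
      have d1 : Htpy ([f x] ++ m :: m :: (γt ++ [f b])) ([f x] ++ m :: (γt ++ [f b])) :=
        htpy_dedup [f x] (γt ++ [f b]) m
    
      have d2 : Htpy ([] ++ f x :: y :: m :: (γt ++ [f b])) ([] ++ f x :: m :: (γt ++ [f b])) :=
        Htpy.down [] (γt ++ [f b]) (f x) y m hm1 hle
      have : Htpy ((p ++ x' :: δ₀).map f) ([f x] ++ m :: (γt ++ [f b])) := by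
        refine main.trans ?_
        simpa using d1
      refine this.trans ?_
      have goal := d2.symm
      simpa using goal

end Lifts4


section Lifts5

variable {X Y : Type*} [Preorder X] [Preorder Y] {f : X → Y}

/-- Uniqueness of lifts with given endpoints, when the fibers are simply connected. -/
theorem lifts_unique (hfib : ∀ y : Y, Nonempty {x : X // y ≤ f x} ∧ Connected {x : X // y ≤ f x})
    (hsc : ∀ y : Y, SimplyConnected {x : X // y ≤ f x}) :
    ∀ {γ : List Y} {δ δ' : List X}, Lifts f γ δ → Lifts f γ δ' →
      δ.head? = δ'.head? → δ.getLast? = δ'.getLast? → Htpy δ δ' := by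
  intro γ
  induction γ with
  | nil => intro δ δ' h; cases h
  | cons y γt ih =>
    intro δ δ' h h' hhd hlast
    rcases γt with _ | ⟨y', γt⟩
    · -- single fiber case
      cases h with
      | single _ _ hne hch hmem =>
        cases h' with
        | single _ _ hne' hch' hmem' =>
          obtain ⟨aa, ha⟩ : ∃ aa, δ.head? = some aa := by
            rcases δ with _ | ⟨u, t⟩
            · exact absurd rfl hne
            · exact ⟨u, rfl⟩
          obtain ⟨bb, hbb⟩ : ∃ bb, δ.getLast? = some bb := by
            rcases δ.eq_nil_or_concat with rfl | ⟨l₀, e, rfl⟩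
            · exact absurd rfl hne
            · exact ⟨e, by simp⟩
          exact fiber_htpy (hsc y) hmem hmem' hch hch' ha (by rw [← hhd]; exact ha)
            hbb (by rw [← hlast]; exact hbb)
    · -- inductive step
      obtain ⟨m, p, δ₁, x₁, x, rfl, hm1, hm2, hm3, hlf, hch, hmem, hhd1, hle⟩ := h.cons_inv
      obtain ⟨m', p', δ₁', x₁', xx, rfl, hm1', hm2', hm3', hlf', hch', hmem', hhd1', hle'⟩ :=
        h'.cons_inv
      have hx₁ : y' ≤ f x₁ := hlf.head_le (by simp) (by simp)
      have hx₁' : y' ≤ f x₁' := hlf'.head_le (by simp) (by simp)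
      -- a path from x₁ to x₁' in the fiber of y'
      obtain ⟨r, hr1, hr2, hr3, hr4⟩ := fiber_path (hfib y').2 hx₁ hx₁'
      have hrdec : r = r.dropLast ++ [x₁'] := eq_dropLast_concat hr4
      have lift2 : Lifts f (y' :: γt) (r.dropLast ++ x₁' :: δ₁') := by
        refine hlf'.prepend (x' := x₁') rfl r.dropLast ?_ ?_
        · rw [← hrdec]; exact hr1
        · intro z hz
          exact hr2 z (by rw [hrdec]; exact hz)
      have hIH : Htpy (x₁ :: δ₁) (r.dropLast ++ x₁' :: δ₁') := by
        refine ih hlf lift2 ?_ ?_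
        · rw [head?_append_cons, ← hrdec, hr3]
          simp
        · rw [List.getLast?_append_of_ne_nil _ (by simp)]
          rw [List.getLast?_append_of_ne_nil _ (by simp),
            List.getLast?_append_of_ne_nil _ (by simp)] at hlast
          exact hlast
      have H1 : Htpy (p ++ x₁ :: δ₁) (p ++ (r.dropLast ++ x₁' :: δ₁')) := hIH.appL p
      -- the two connecting paths are homotopic in the fiber of m₀
      have hcompyy' : Comp y y' := by
        rcases hm3 with rfl | rfl
        · exact Or.inl hm2
        · exact Or.inr hm1
      obtain ⟨m₀, hA, hB, hC⟩ : ∃ m₀, m₀ ≤ m ∧ m₀ ≤ m' ∧ m₀ ≤ y' := by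
        have hcmm' : Comp m m' := by
          rcases hm3 with rfl | rfl <;> rcases hm3' with rfl | rfl
          · exact Or.inl le_rfl
          · exact hcompyy'
          · exact hcompyy'.symm'
          · exact Or.inl le_rfl
        rcases hcmm' with hc | hc
        · exact ⟨m, le_rfl, hc, hm2⟩
        · exact ⟨m', hc, le_rfl, hm2'⟩
      have hx : x = xx := by
        rw [head?_append_cons p x₁ δ₁, head?_append_cons p' x₁' δ₁', hhd1, hhd1'] at hhd
        simpa using hhd
      subst hx
      have H2 : Htpy (p ++ r) (p' ++ [x₁']) := by
        refine fiber_htpy (y := m₀) (hsc m₀) ?_ ?_ ?_ ?_ (a := x) ?_ ?_ (b := x₁') ?_ ?_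
        · intro z hz
          rcases List.mem_append.mp hz with hz | hz
          · exact le_trans hA (hmem z (List.mem_append.mpr (Or.inl hz)))
          · exact le_trans hC (hr2 z hz)
        · intro z hz
          exact le_trans hB (hmem' z hz)
        · rw [List.chain'_append]
          rw [List.chain'_append] at hch
          refine ⟨hch.1, hr1, ?_⟩
          intro u hu v hv
          rw [hr3] at hv
          have := Option.mem_some_iff.mp hv
          subst this
          exact hch.2.2 u hu x₁ (by simp)
        · exact hch'
        · rw [head?_append_eq hr3]; exact hhd1
        · exact hhd1'
        · rw [List.getLast?_append_of_ne_nil _ (by intro e; subst e; simp at hr3)]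
          exact hr4
        · simp
      have H3 : Htpy ((p ++ r) ++ δ₁') ((p' ++ [x₁']) ++ δ₁') := H2.appR δ₁'
      have e1 : p ++ (r.dropLast ++ x₁' :: δ₁') = (p ++ r) ++ δ₁' := by
        rw [hrdec]
        simp
      have e2 : (p' ++ [x₁']) ++ δ₁' = p' ++ x₁' :: δ₁' := by simp
      have H3' : Htpy (p ++ (r.dropLast ++ x₁' :: δ₁')) (p' ++ x₁' :: δ₁') := by
        rw [e1, ← e2]; exact H3
      exact H1.trans H3'

end Lifts5


section Main

variable {X Y : Type*} [Preorder X] [Preorder Y] {f : X → Y}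

theorem Lifts.gamma_ne_nil {γ : List Y} {δ : List X} (h : Lifts f γ δ) : γ ≠ [] := by
  cases h <;> simp

/-- Replace the middle part of a path by another path with the same endpoints, lifting. -/
theorem replace_mid (hfib : ∀ y : Y, Nonempty {x : X // y ≤ f x} ∧ Connected {x : X // y ≤ f x})
    (hsc : ∀ y : Y, SimplyConnected {x : X // y ≤ f x})
    {P I Q mid' : List Y} {w₁ w₂ : Y} (m₀ : Y)
    (h1 : ∀ w ∈ w₁ :: (I ++ [w₂]), m₀ ≤ w) (h2 : ∀ w ∈ mid', m₀ ≤ w)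
    (hh : mid'.head? = some w₁) (hl : mid'.getLast? = some w₂) (hc : mid'.Chain' Comp)
    {δ : List X} (h : Lifts f (P ++ w₁ :: (I ++ w₂ :: Q)) δ) :
    ∃ δ', Lifts f (P ++ (mid' ++ Q)) δ' ∧ Htpy δ δ' ∧ δ.head? = δ'.head? ∧
      δ.getLast? = δ'.getLast? := by
  obtain ⟨d₁, a, δ₂, rfl, piece1, piece2⟩ := h.split
  have piece2' : Lifts f ((w₁ :: I) ++ w₂ :: Q) (a :: δ₂) := by simpa using piece2
  obtain ⟨d₂, c, δ₃, hdec2, pieceM, piece3⟩ := piece2'.split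
  have hheadM : (d₂ ++ [c]).head? = some a := by
    rw [← head?_append_cons d₂ c δ₃, ← hdec2]; simp
  have hwa : w₁ ≤ f a := pieceM.head_le (by simp) hheadM
  have hwc : w₂ ≤ f c := piece3.head_le (by simp) (by simp)
  obtain ⟨e, he, heh, hel⟩ := lifts_exists hfib hc hh hl hwa hwc
  -- the two middles are homotopic
  have Hm : Htpy (d₂ ++ [c]) e := by
    refine fiber_htpy (y := m₀) (hsc m₀) ?_ ?_ pieceM.chain' he.chain' hheadM heh
      (by simp) hel
    · exact pieceM.lb (fun w hw => h1 w (by simpa using hw))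
    · exact he.lb h2
  -- glue the lift of mid' back in
  have he' : Lifts f (mid'.dropLast ++ [w₂]) e := by rw [← eq_dropLast_concat hl]; exact he
  have glue1 := he'.glue hel piece3
  have e7 : mid'.dropLast ++ w₂ :: Q = mid' ++ Q := by
    conv_rhs => rw [eq_dropLast_concat hl]
    simp
  rw [e7] at glue1
  -- rewrite the lift as a :: something
  have hene : e ≠ [] := by intro hx; subst hx; simp at heh
  have hglist : e.dropLast ++ c :: δ₃ = e ++ δ₃ := by
    rw [eq_dropLast_concat hel]
    simp only [List.dropLast_append_of_ne_nil (by simp : [c] ≠ ([] : List X))]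
    simp
  obtain ⟨t2, ht2⟩ : ∃ t2, e.dropLast ++ c :: δ₃ = a :: t2 := by
    refine eq_cons_of_head? ?_
    rw [hglist, List.head?_append_of_ne_nil _ hene]
    exact heh
  obtain ⟨rest, hrest⟩ : ∃ rest, mid' ++ Q = w₁ :: rest := by
    refine eq_cons_of_head? ?_
    rw [List.head?_append_of_ne_nil _ (by intro hx; subst hx; simp at hh)]
    exact hh
  rw [ht2, hrest] at glue1
  have glue2 := piece1.glue (c := a) (by simp) glue1
  rw [← hrest] at glue2
  have hd₁a : (d₁ ++ [a]).dropLast = d₁ := by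
    rw [List.dropLast_append_of_ne_nil (by simp : [a] ≠ ([] : List X))]
    simp
  rw [hd₁a] at glue2
  refine ⟨d₁ ++ a :: t2, glue2, ?_, ?_, ?_⟩
  · -- homotopy
    have e5 : d₁ ++ a :: δ₂ = d₁ ++ (d₂ ++ [c]) ++ δ₃ := by
      rw [hdec2]; simp
    have e6 : d₁ ++ a :: t2 = d₁ ++ e ++ δ₃ := by
      rw [← ht2, hglist, List.append_assoc]
    rw [e5, e6]
    exact Hm.ctx d₁ δ₃
  · rw [head?_append_cons d₁ a δ₂, head?_append_cons d₁ a t2]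
  · rw [List.getLast?_append_of_ne_nil _ (by simp : a :: δ₂ ≠ []),
      List.getLast?_append_of_ne_nil _ (by simp : a :: t2 ≠ []), hdec2, ← ht2]
    rw [List.getLast?_append_of_ne_nil _ (by simp : c :: δ₃ ≠ []),
      List.getLast?_append_of_ne_nil _ (by simp : c :: δ₃ ≠ [])]

/-- Lifts of homotopic paths with the same endpoints are homotopic. -/
theorem lifts_master (hf : Monotone f)
    (hfib : ∀ y : Y, Nonempty {x : X // y ≤ f x} ∧ Connected {x : X // y ≤ f x})
    (hsc : ∀ y : Y, SimplyConnected {x : X // y ≤ f x})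
    {γ γ' : List Y} (H : Htpy γ γ') :
    ∀ {δ δ' : List X}, Lifts f γ δ → Lifts f γ' δ' → δ.head? = δ'.head? →
      δ.getLast? = δ'.getLast? → Htpy δ δ' := by
  induction H with
  | refl l => exact fun hδ hδ' hh hl => lifts_unique hfib hsc hδ hδ' hh hl
  | symm h ih => exact fun hδ hδ' hh hl => (ih hδ' hδ hh.symm hl.symm).symm
  | trans h₁ h₂ ih₁ ih₂ =>
    rename_i γ₁ γₘ γ₂
    intro δ δ' hδ hδ' hh hl
    obtain ⟨xa, hxa⟩ : ∃ xa, δ.head? = some xa := by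
      rcases δ with _ | ⟨u, t⟩
      · exact absurd rfl hδ.ne_nil
      · exact ⟨u, rfl⟩
    obtain ⟨xb, hxb⟩ : ∃ xb, δ.getLast? = some xb := by
      rcases δ.eq_nil_or_concat with rfl | ⟨l₀, ee, rfl⟩
      · exact absurd rfl hδ.ne_nil
      · exact ⟨ee, by simp⟩
    obtain ⟨yh, hyh⟩ : ∃ yh, γ₁.head? = some yh := by
      rcases γ₁ with _ | ⟨u, t⟩
      · exact absurd rfl hδ.gamma_ne_nil
      · exact ⟨u, rfl⟩
    obtain ⟨yl, hyl⟩ : ∃ yl, γ₁.getLast? = some yl := by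
      rcases γ₁.eq_nil_or_concat with rfl | ⟨l₀, ee, rfl⟩
      · exact absurd rfl hδ.gamma_ne_nil
      · exact ⟨ee, by simp⟩
    obtain ⟨δm, hδm, hmh, hml⟩ := lifts_exists (f := f) hfib
      (h₁.chain'_iff.mp hδ.chainY) (by rw [← h₁.head?_eq]; exact hyh)
      (by rw [← h₁.getLast?_eq]; exact hyl)
      (hδ.head_le hyh hxa) (hδ.last_le hyl hxb)
    have first := ih₁ hδ hδm (by rw [hxa, hmh]) (by rw [hxb, hml])
    have second := ih₂ hδm hδ' (by rw [hmh, ← hh, hxa]) (by rw [hml, ← hl, hxb])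
    exact first.trans second
  | up p q x y z hxy hyz =>
    intro δ δ' hδ hδ' hh hl
    have h := replace_mid (f := f) hfib hsc (P := p) (I := [y]) (Q := q) (mid' := [x, z])
      (w₁ := x) (w₂ := z) x
      (by intro w hw; simp at hw; rcases hw with rfl | rfl | rfl
          exacts [le_rfl, hxy, hxy.trans hyz])
      (by intro w hw; simp at hw; rcases hw with rfl | rfl
          exacts [le_rfl, hxy.trans hyz])
      (by simp) (by simp)
      (by simp only [List.chain'_cons, List.chain'_singleton, and_true]
          exact Or.inl (hxy.trans hyz))
      (by simpa using hδ)
    obtain ⟨δ'', hδ'', hH, hh2, hl2⟩ := h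
    have hδ''2 : Lifts f (p ++ x :: z :: q) δ'' := by simpa using hδ''
    exact hH.trans (lifts_unique hfib hsc hδ''2 hδ' (by rw [← hh2]; exact hh)
      (by rw [← hl2]; exact hl))
  | down p q x y z hzy hyx =>
    intro δ δ' hδ hδ' hh hl
    have h := replace_mid (f := f) hfib hsc (P := p) (I := [y]) (Q := q) (mid' := [x, z])
      (w₁ := x) (w₂ := z) z
      (by intro w hw; simp at hw; rcases hw with rfl | rfl | rfl
          exacts [hzy.trans hyx, hzy, le_rfl])
      (by intro w hw; simp at hw; rcases hw with rfl | rfl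
          exacts [hzy.trans hyx, le_rfl])
      (by simp) (by simp)
      (by simp only [List.chain'_cons, List.chain'_singleton, and_true]
          exact Or.inr (hzy.trans hyx))
      (by simpa using hδ)
    obtain ⟨δ'', hδ'', hH, hh2, hl2⟩ := h
    have hδ''2 : Lifts f (p ++ x :: z :: q) δ'' := by simpa using hδ''
    exact hH.trans (lifts_unique hfib hsc hδ''2 hδ' (by rw [← hh2]; exact hh)
      (by rw [← hl2]; exact hl))
  | backforth p q x y hcxy =>
    intro δ δ' hδ hδ' hh hl
    obtain ⟨m₀, hm₀x, hm₀y⟩ : ∃ m₀, m₀ ≤ x ∧ m₀ ≤ y := by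
      rcases hcxy with hc | hc
      · exact ⟨x, le_rfl, hc⟩
      · exact ⟨y, hc, le_rfl⟩
    have h := replace_mid (f := f) hfib hsc (P := p) (I := [y]) (Q := q) (mid' := [x])
      (w₁ := x) (w₂ := x) m₀
      (by intro w hw; simp at hw; rcases hw with rfl | rfl | rfl
          exacts [hm₀x, hm₀y, hm₀x])
      (by intro w hw; simp at hw; subst hw; exact hm₀x)
      (by simp) (by simp) (by simp)
      (by simpa using hδ)
    obtain ⟨δ'', hδ'', hH, hh2, hl2⟩ := h
    have hδ''2 : Lifts f (p ++ x :: q) δ'' := by simpa using hδ''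
    exact hH.trans (lifts_unique hfib hsc hδ''2 hδ' (by rw [← hh2]; exact hh)
      (by rw [← hl2]; exact hl))

end Main


/-- Bouc's lemma: let `f : X → Y` be an order preserving map of posets with `Y` connected such
that every `f⁻¹(Y_{≥y})` is nonempty and connected. Then the induced map on fundamental groups
is surjective (every loop in `Y` is homotopic to the image of a loop in `X`); if moreover each
`f⁻¹(Y_{≥y})` is simply connected, it is an isomorphism (in addition, two loops in `X` whose
images are homotopic are homotopic). -/
theorem stmt18 {X Y : Type*} [PartialOrder X] [PartialOrder Y]
    (f : X → Y) (hf : Monotone f) (hY : Connected Y)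
    (hfib : ∀ y : Y, Nonempty {x : X // y ≤ f x} ∧ Connected {x : X // y ≤ f x}) :
    (∀ (x₀ : X) (γ : List Y), IsPath γ (f x₀) (f x₀) →
        ∃ δ : List X, IsPath δ x₀ x₀ ∧ Htpy (δ.map f) γ) ∧
    ((∀ y : Y, SimplyConnected {x : X // y ≤ f x}) →
      ∀ (x₀ : X) (δ δ' : List X), IsPath δ x₀ x₀ → IsPath δ' x₀ x₀ →
        Htpy (δ.map f) (δ'.map f) → Htpy δ δ') := by
  constructor
  · -- surjectivity
    rintro x₀ γ ⟨hγh, hγl, hγc⟩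
    obtain ⟨δ, hδ, hh, hl⟩ := lifts_exists (f := f) hfib hγc hγh hγl
      (a := x₀) (b := x₀) le_rfl le_rfl
    refine ⟨δ, ⟨hh, hl, hδ.chain'⟩, ?_⟩
    have main := hδ.htpy_map hf hh hl
    obtain ⟨γt, rfl⟩ := eq_cons_of_head? hγh
    have d1 : Htpy ([] ++ f x₀ :: f x₀ :: (γt ++ [f x₀])) ([] ++ f x₀ :: (γt ++ [f x₀])) :=
      htpy_dedup [] (γt ++ [f x₀]) (f x₀)
    have H2 : Htpy (δ.map f) (f x₀ :: (γt ++ [f x₀])) := by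
      refine main.trans ?_
      simpa using d1
    have hγdec := eq_dropLast_concat hγl
    have d2 : Htpy ((f x₀ :: γt).dropLast ++ f x₀ :: f x₀ :: [])
        ((f x₀ :: γt).dropLast ++ f x₀ :: []) :=
      htpy_dedup ((f x₀ :: γt).dropLast) [] (f x₀)
    have e8 : f x₀ :: (γt ++ [f x₀]) = (f x₀ :: γt) ++ [f x₀] := by simp
    have e9 : (f x₀ :: γt) ++ [f x₀] = (f x₀ :: γt).dropLast ++ (f x₀ :: f x₀ :: []) := by
      conv_lhs => rw [hγdec]
      simp
    have d2' : Htpy (f x₀ :: (γt ++ [f x₀])) ((f x₀ :: γt).dropLast ++ f x₀ :: []) := by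
      rw [e8, e9]; exact d2
    have e10 : (f x₀ :: γt).dropLast ++ f x₀ :: [] = f x₀ :: γt := by
      rw [← hγdec]
    rw [e10] at d2'
    exact H2.trans d2'
  · -- injectivity
    intro hsc x₀ δ δ' hp hp' hH
    obtain ⟨hh, hl, hch⟩ := hp
    obtain ⟨hh', hl', hch'⟩ := hp'
    have hδ := lifts_self (f := f) hf hch (by intro e; subst e; simp at hh)
    have hδ' := lifts_self (f := f) hf hch' (by intro e; subst e; simp at hh')
    exact lifts_master hf hfib hsc hH hδ hδ' (by rw [hh, hh']) (by rw [hl, hl'])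


end PosetHtpy
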